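/- Let m be a squarefree positive integer, m ≡ 11 (mod 24), whose prime factors all satisfy (−6/p) = 1, with t prime factors in total. Then R(m, 2x² + 3y²) = 2^{t+1}. -/

import Mathlib

open Zsqrtd

lemma normdef (z : ℤ√(-6)) : z.norm = z.re^2 + 6*z.im^2 := by rw [norm_def]; ring

lemma finNm (n : ℤ) : Finite {z : ℤ√(-6) // z.norm = n} := by
  have h : ∀ z : {z : ℤ√(-6) // z.norm = n},
      (z.1.re, z.1.im) ∈ Set.Icc ((-n, -n) : ℤ × ℤ) (n, n) := by
    rintro ⟨z, hz⟩
    rw [normdef] at hz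
    constructor <;> constructor <;> simp <;> nlinarith [sq_nonneg z.re, sq_nonneg z.im,
      sq_nonneg (z.re - n), sq_nonneg (z.re + n), sq_nonneg (z.im - n), sq_nonneg (z.im + n)]
  have : Finite (Set.Icc ((-n, -n) : ℤ × ℤ) (n, n)) := (Set.finite_Icc _ _).to_subtype
  apply Finite.of_injective (fun z => (⟨(z.1.re, z.1.im), h z⟩ : Set.Icc ((-n,-n) : ℤ×ℤ) ((n,n))))
  rintro ⟨⟨a,b⟩,_⟩ ⟨⟨c,e⟩,_⟩ hz
  simp only [Subtype.mk.injEq, Prod.mk.injEq] at hz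
  simp [Zsqrtd.ext_iff, hz.1, hz.2]

lemma sq_ne_two (x : ℤ) : x ^ 2 ≠ 2 := by
  intro h
  rcases eq_or_ne x 0 with rfl | hx
  · simp at h
  · have := Int.sq_eq_one_of_sq_lt_four (x := x) (by linarith) hx
    omega

lemma normone : {z : ℤ√(-6) | z.norm = 1} = {1, -1} := by
  ext z
  simp only [Set.mem_setOf_eq, Set.mem_insert_iff, Set.mem_singleton_iff, normdef]
  constructor
  · intro h
    have him : z.im = 0 := by nlinarith [sq_nonneg z.im, sq_nonneg z.re]
    have h1 : z.re ^ 2 = 1 := by rw [him] at h; simpa using h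
    rcases sq_eq_one_iff.mp h1 with h1 | h1 <;> [left; right] <;> simp [Zsqrtd.ext_iff, h1, him]
  · rintro (rfl | rfl) <;> simp

lemma cardone : Nat.card {z : ℤ√(-6) // z.norm = 1} = 2 := by
  have : {z : ℤ√(-6) // z.norm = 1} = ↥{z : ℤ√(-6) | z.norm = 1} := rfl
  rw [this, Nat.card_coe_set_eq, normone, Set.ncard_pair (by decide)]

lemma cardtwo : Nat.card {z : ℤ√(-6) // z.norm = 2} = 0 := by
  have : IsEmpty {z : ℤ√(-6) // z.norm = 2} := by
    constructor; rintro ⟨z, hz⟩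
    rw [normdef] at hz
    have him : z.im = 0 := by nlinarith [sq_nonneg z.im, sq_nonneg z.re]
    rw [him] at hz
    exact sq_ne_two z.re (by linarith)
  simp

lemma re_even_of_norm_even {z : ℤ√(-6)} (h : Even z.norm) : Even z.re := by
  rw [normdef] at h
  have h6 : Even (6 * z.im ^ 2) := ⟨3 * z.im ^ 2, by ring⟩
  have : Even (z.re ^ 2) := (Int.even_add.mp h).mpr h6
  exact (Int.even_pow.mp this).1

noncomputable def solEquiv (m : ℤ) :
    {q : ℤ × ℤ // 2 * q.1 ^ 2 + 3 * q.2 ^ 2 = m} ≃ {z : ℤ√(-6) // z.norm = 2 * m} := by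
  apply Equiv.ofBijective (f := fun q => ⟨⟨2 * q.1.1, q.1.2⟩, by
    rw [normdef]; simp only []; nlinarith [q.2]⟩)
  constructor
  · rintro ⟨⟨a,b⟩,_⟩ ⟨⟨c,e⟩,_⟩ h
    simp only [Subtype.mk.injEq, Zsqrtd.ext_iff] at h
    simp only [Subtype.mk.injEq, Prod.mk.injEq]
    omega
  · rintro ⟨z, hz⟩
    have he : Even z.re := re_even_of_norm_even (by rw [hz]; exact ⟨m, by ring⟩)
    rcases he with ⟨r, hr⟩
    have hz' := hz; rw [normdef, hr] at hz'
    refine ⟨⟨(r, z.im), by nlinarith⟩, ?_⟩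
    simp only [Subtype.ext_iff, Zsqrtd.ext_iff]
    exact ⟨by omega, trivial⟩

noncomputable def fourEquiv (n : ℤ) :
    {z : ℤ√(-6) // z.norm = n} ≃ {z : ℤ√(-6) // z.norm = 4 * n} := by
  apply Equiv.ofBijective (f := fun z => ⟨⟨2 * z.1.re, 2 * z.1.im⟩, by
    have := z.2; rw [normdef] at this ⊢; simp only []; nlinarith⟩)
  constructor
  · rintro ⟨z, _⟩ ⟨w, _⟩ h
    simp only [Subtype.mk.injEq, Zsqrtd.ext_iff] at h ⊢
    omega
  · rintro ⟨z, hz⟩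
    have hre : Even z.re := re_even_of_norm_even (by rw [hz]; exact ⟨2*n, by ring⟩)
    rcases hre with ⟨r, hr⟩
    have hz' := hz; rw [normdef, hr] at hz'
    have him : Even z.im := by
      have h3 : Even (3 * z.im ^ 2) := ⟨n - r*r, by nlinarith⟩
      have : Even (z.im ^ 2) := by
        rcases Int.even_mul.mp h3 with h | h
        · exact absurd h (by decide)
        · exact h
      exact (Int.even_pow.mp this).1
    rcases him with ⟨s, hs⟩
    rw [hs] at hz'
    refine ⟨⟨⟨r, s⟩, by rw [normdef]; simp only []; nlinarith⟩, ?_⟩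
    simp only [Subtype.ext_iff, Zsqrtd.ext_iff]
    exact ⟨by omega, by omega⟩

lemma wim_ndvd (p : ℕ) (hp : p.Prime) (hgt : 2 < p) (e : ℤ) (he : e = 1 ∨ e = 2)
    (w : ℤ√(-6)) (hw : w.norm = e * p) : ¬ (p:ℤ) ∣ w.im := by
  intro hdvd
  have hpZ : Prime (p:ℤ) := Nat.prime_iff_prime_int.mp hp
  obtain ⟨i, hi⟩ := hdvd
  rw [normdef] at hw
  have h1 : (p:ℤ) ∣ w.re ^ 2 := ⟨e - 6 * p * i^2, by rw [hi] at hw; ring_nf; ring_nf at hw; nlinarith⟩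
  obtain ⟨r, hr⟩ := hpZ.dvd_of_dvd_pow (n := 2) h1
  have hcancel : e = (p:ℤ) * (r^2 + 6*i^2) := by
    have hp0 : (p:ℤ) ≠ 0 := by positivity
    apply mul_right_cancel₀ hp0
    rw [hi, hr] at hw; ring_nf at hw ⊢; nlinarith
  have hk : 0 ≤ r^2 + 6*i^2 := by positivity
  have hp3 : (3:ℤ) ≤ p := by exact_mod_cast hgt
  rcases lt_or_ge (r^2 + 6*i^2) 1 with hlt | hge
  · have hk0 : r^2 + 6*i^2 = 0 := le_antisymm (by omega) hk
    rw [hk0, mul_zero] at hcancel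
    rcases he with rfl | rfl <;> simp at hcancel
  · have h3 : (3:ℤ) * 1 ≤ (p:ℤ) * (r^2+6*i^2) :=
      mul_le_mul hp3 hge (by norm_num) (by positivity)
    rcases he with rfl | rfl <;> linarith

lemma wre_ndvd (p : ℕ) (hp : p.Prime) (hgt : 3 < p) (e : ℤ) (he : e = 1 ∨ e = 2)
    (w : ℤ√(-6)) (hw : w.norm = e * p) : ¬ (p:ℤ) ∣ w.re := by
  intro hdvd
  have hpZ : Prime (p:ℤ) := Nat.prime_iff_prime_int.mp hp
  obtain ⟨r, hr⟩ := hdvd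
  rw [normdef] at hw
  have h1 : (p:ℤ) ∣ 6 * w.im ^ 2 := ⟨e - p * r^2, by rw [hr] at hw; ring_nf at hw ⊢; nlinarith⟩
  have h6 : ¬ (p:ℤ) ∣ 6 := by
    intro h
    have h23 : (p:ℤ) ∣ 2 * 3 := by norm_num; exact h
    have hgt' : 3 < (p:ℤ) := by exact_mod_cast hgt
    rcases hpZ.dvd_mul.mp h23 with h' | h' <;>
      have := Int.le_of_dvd (by norm_num) h' <;> omega
  have him : (p:ℤ) ∣ w.im := by
    rcases hpZ.dvd_mul.mp h1 with h | h
    · exact absurd h h6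
    · exact hpZ.dvd_of_dvd_pow h
  exact wim_ndvd p hp (by omega) e he w (by rw [normdef]; exact hw) him

lemma dichotomy (p : ℕ) (hp : p.Prime) (hgt : 3 < p) (M e : ℤ) (hpM : ¬ (p:ℤ) ∣ M)
    (he : e = 1 ∨ e = 2) (w : ℤ√(-6)) (hw : w.norm = e * p)
    (z : ℤ√(-6)) (hz : z.norm = p * M) :
    ((p:ℤ) ∣ (z.im * w.re - z.re * w.im) ∨ (p:ℤ) ∣ (z.im * w.re + z.re * w.im)) ∧
    ¬((p:ℤ) ∣ (z.im * w.re - z.re * w.im) ∧ (p:ℤ) ∣ (z.im * w.re + z.re * w.im)) := by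
  have hpZ : Prime (p:ℤ) := Nat.prime_iff_prime_int.mp hp
  rw [normdef] at hw hz
  constructor
  · have key : (p:ℤ) ∣ (z.im * w.re - z.re * w.im) * (z.im * w.re + z.re * w.im) := by
      refine ⟨z.im^2 * e - w.im^2 * M, ?_⟩
      have : (z.im * w.re - z.re * w.im) * (z.im * w.re + z.re * w.im)
          = z.im^2 * (w.re^2 + 6*w.im^2) - w.im^2 * (z.re^2 + 6*z.im^2) := by ring
      rw [this, hw, hz]; ring
    exact hpZ.dvd_mul.mp key
  · rintro ⟨hA, hB⟩
    have h2 : ¬ (p:ℤ) ∣ 2 := by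
      intro h
      have := Int.le_of_dvd (by norm_num) h
      have : 3 < (p:ℤ) := by exact_mod_cast hgt
      omega
    have hA2 := dvd_add hA hB
    have hB2 := dvd_sub hB hA
    have e1 : z.im * w.re - z.re * w.im + (z.im * w.re + z.re * w.im) = 2 * (z.im * w.re) := by ring
    have e2 : z.im * w.re + z.re * w.im - (z.im * w.re - z.re * w.im) = 2 * (z.re * w.im) := by ring
    rw [e1] at hA2; rw [e2] at hB2
    have him : (p:ℤ) ∣ z.im := by
      rcases hpZ.dvd_mul.mp hA2 with h | h
      · exact absurd h h2
      rcases hpZ.dvd_mul.mp h with h | h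
      · exact h
      · exact absurd h (wre_ndvd p hp hgt e he w (by rw [normdef]; exact hw))
    have hre : (p:ℤ) ∣ z.re := by
      rcases hpZ.dvd_mul.mp hB2 with h | h
      · exact absurd h h2
      rcases hpZ.dvd_mul.mp h with h | h
      · exact h
      · exact absurd h (wim_ndvd p hp (by omega) e he w (by rw [normdef]; exact hw))
    obtain ⟨a, ha⟩ := hre; obtain ⟨b, hb⟩ := him
    apply hpM
    have hp0 : (p:ℤ) ≠ 0 := by positivity
    refine ⟨a^2 + 6*b^2, mul_left_cancel₀ hp0 ?_⟩
    rw [← hz, ha, hb]; ring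

lemma div_exists (pp : ℤ) (M e : ℤ) (he : e = 1 ∨ e = 2) (w u : ℤ√(-6))
    (hw : w.norm = e * pp) (hu : u.norm = e * M) :
    ∃ C D, u.re*w.re - 6*u.im*w.im = e*C ∧ u.re*w.im + u.im*w.re = e*D := by
  rcases he with rfl | rfl
  · exact ⟨_, _, (one_mul _).symm, (one_mul _).symm⟩
  · have hwre : Even w.re := re_even_of_norm_even (by rw [hw]; exact ⟨pp, by ring⟩)
    have hure : Even u.re := re_even_of_norm_even (by rw [hu]; exact ⟨M, by ring⟩)
    obtain ⟨a, ha⟩ := hure; obtain ⟨c, hc⟩ := hwre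
    exact ⟨a*w.re - 3*u.im*w.im, a*w.im + u.im*c, by rw [ha]; ring, by rw [ha, hc]; ring⟩

noncomputable def stepEquiv (p : ℕ) (hp : p.Prime) (hgt : 3 < p) (M e : ℤ)
    (hpM : ¬ (p:ℤ) ∣ M) (he : e = 1 ∨ e = 2) (w : ℤ√(-6)) (hw : w.norm = e * p) :
    {u : ℤ√(-6) // u.norm = e * M} ≃
      {z : ℤ√(-6) // z.norm = p * M ∧ (p:ℤ) ∣ (z.im * w.re - z.re * w.im)} := by
  have he0 : e ≠ 0 := by rcases he with rfl | rfl <;> norm_num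
  have hp0 : (p:ℤ) ≠ 0 := by positivity
  have hwd := hw; rw [normdef] at hwd
  apply Equiv.ofBijective (f := fun u =>
    ⟨⟨(u.1.re*w.re - 6*u.1.im*w.im)/e, (u.1.re*w.im + u.1.im*w.re)/e⟩, by
      obtain ⟨C, D, hC, hD⟩ := div_exists p M e he w u.1 hw u.2
      have hud := u.2; rw [normdef] at hud
      simp only [hC, hD, Int.mul_ediv_cancel_left _ he0]
      constructor
      · rw [normdef]
        have key : e*e*(C^2 + 6*D^2) = e*e*((p:ℤ)*M) := by
          have h1 : e*e*(C^2 + 6*D^2) = (e*C)^2 + 6*(e*D)^2 := by ring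
          rw [h1, ← hC, ← hD]
          have h2 : (u.1.re*w.re - 6*u.1.im*w.im)^2 + 6*(u.1.re*w.im + u.1.im*w.re)^2
              = (u.1.re^2+6*u.1.im^2) * (w.re^2+6*w.im^2) := by ring
          rw [h2, hud, hwd]; ring
        have := mul_left_cancel₀ (mul_ne_zero he0 he0) key
        simpa using this
      · refine ⟨u.1.im, mul_left_cancel₀ he0 ?_⟩
        have : e * (D * w.re - C * w.im) = (e*D)*w.re - (e*C)*w.im := by ring
        rw [this, ← hC, ← hD]
        have : (u.1.re*w.im + u.1.im*w.re)*w.re - (u.1.re*w.re - 6*u.1.im*w.im)*w.im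
            = u.1.im * (w.re^2 + 6*w.im^2) := by ring
        rw [this, hwd]; ring⟩)
  constructor
  · rintro ⟨u₁, hu₁⟩ ⟨u₂, hu₂⟩ hz
    obtain ⟨C₁, D₁, hC₁, hD₁⟩ := div_exists p M e he w u₁ hw hu₁
    obtain ⟨C₂, D₂, hC₂, hD₂⟩ := div_exists p M e he w u₂ hw hu₂
    simp only [Subtype.mk.injEq, Zsqrtd.ext_iff, hC₁, hD₁, hC₂, hD₂,
      Int.mul_ediv_cancel_left _ he0] at hz
    obtain ⟨hCC, hDD⟩ := hz
    have hre : u₁.re * (e*(p:ℤ)) = u₂.re * (e*(p:ℤ)) := by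
      have h1 : u₁.re * (e*(p:ℤ)) = (e*C₁)*w.re + 6*(e*D₁)*w.im := by
        rw [← hC₁, ← hD₁, ← hwd]; ring
      have h2 : u₂.re * (e*(p:ℤ)) = (e*C₂)*w.re + 6*(e*D₂)*w.im := by
        rw [← hC₂, ← hD₂, ← hwd]; ring
      rw [h1, h2, hCC, hDD]
    have him : u₁.im * (e*(p:ℤ)) = u₂.im * (e*(p:ℤ)) := by
      have h1 : u₁.im * (e*(p:ℤ)) = (e*D₁)*w.re - (e*C₁)*w.im := by
        rw [← hC₁, ← hD₁, ← hwd]; ring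
      have h2 : u₂.im * (e*(p:ℤ)) = (e*D₂)*w.re - (e*C₂)*w.im := by
        rw [← hC₂, ← hD₂, ← hwd]; ring
      rw [h1, h2, hCC, hDD]
    have hep : e * (p:ℤ) ≠ 0 := mul_ne_zero he0 hp0
    simp only [Subtype.mk.injEq, Zsqrtd.ext_iff]
    exact ⟨mul_right_cancel₀ hep hre, mul_right_cancel₀ hep him⟩
  · rintro ⟨z, hz, hdvd⟩
    have hzd := hz; rw [normdef] at hzd
    have hpZ : Prime (p:ℤ) := Nat.prime_iff_prime_int.mp hp
    have hdvd2 : (p:ℤ) ∣ (z.re*w.re + 6*z.im*w.im) := by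
      have hwim : ¬ (p:ℤ) ∣ w.im := wim_ndvd p hp (by omega) e he w hw
      have key : (p:ℤ) ∣ w.im * (z.re*w.re + 6*z.im*w.im) := by
        obtain ⟨k, hk⟩ := hdvd
        refine ⟨z.im * e - w.re * k, ?_⟩
        have : w.im * (z.re*w.re + 6*z.im*w.im)
            = z.im * (w.re^2 + 6*w.im^2) - w.re * (z.im * w.re - z.re * w.im) := by ring
        rw [this, hwd, hk]; ring
      rcases hpZ.dvd_mul.mp key with h | h
      · exact absurd h hwim
      · exact h
    obtain ⟨k₁, hk₁⟩ := hdvd2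
    obtain ⟨k₂, hk₂⟩ := hdvd
    have hun : Zsqrtd.norm (⟨k₁, k₂⟩ : ℤ√(-6)) = e * M := by
      rw [normdef]
      have key : (p:ℤ)*(p:ℤ)*(k₁^2 + 6*k₂^2) = (p:ℤ)*(p:ℤ)*(e*M) := by
        have h1 : ((p:ℤ)*k₁)^2 + 6*((p:ℤ)*k₂)^2 = (z.re^2+6*z.im^2) * (w.re^2+6*w.im^2) := by
          rw [← hk₁, ← hk₂]; ring
        rw [hzd, hwd] at h1; nlinarith [h1]
      have := mul_left_cancel₀ (mul_ne_zero hp0 hp0) key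
      simpa using this
    refine ⟨⟨⟨k₁, k₂⟩, hun⟩, ?_⟩
    obtain ⟨C, D, hC, hD⟩ := div_exists p M e he w ⟨k₁, k₂⟩ hw hun
    have hCz : C = z.re := by
      apply mul_left_cancel₀ he0
      apply mul_left_cancel₀ hp0
      have : (p:ℤ) * (e * C) = ((p:ℤ)*k₁) * w.re - 6*((p:ℤ)*k₂)*w.im := by
        rw [← hC]; push_cast; ring
      rw [this, ← hk₁, ← hk₂]
      have : (z.re*w.re + 6*z.im*w.im) * w.re - 6*(z.im*w.re - z.re*w.im)*w.im
          = z.re * (w.re^2 + 6*w.im^2) := by ring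
      rw [this, hwd]; ring
    have hDz : D = z.im := by
      apply mul_left_cancel₀ he0
      apply mul_left_cancel₀ hp0
      have : (p:ℤ) * (e * D) = ((p:ℤ)*k₁) * w.im + ((p:ℤ)*k₂)*w.re := by
        rw [← hD]; push_cast; ring
      rw [this, ← hk₁, ← hk₂]
      have : (z.re*w.re + 6*z.im*w.im) * w.im + (z.im*w.re - z.re*w.im)*w.re
          = z.im * (w.re^2 + 6*w.im^2) := by ring
      rw [this, hwd]; ring
    simp only [Subtype.mk.injEq, Zsqrtd.ext_iff]
    constructor
    · show ((⟨k₁,k₂⟩ : ℤ√(-6)).re * w.re - 6*(⟨k₁,k₂⟩ : ℤ√(-6)).im * w.im)/e = z.re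
      rw [show (⟨k₁,k₂⟩ : ℤ√(-6)).re = k₁ from rfl, show (⟨k₁,k₂⟩ : ℤ√(-6)).im = k₂ from rfl] at hC ⊢
      rw [hC, Int.mul_ediv_cancel_left _ he0, hCz]
    · show ((⟨k₁,k₂⟩ : ℤ√(-6)).re * w.im + (⟨k₁,k₂⟩ : ℤ√(-6)).im * w.re)/e = z.im
      rw [show (⟨k₁,k₂⟩ : ℤ√(-6)).re = k₁ from rfl, show (⟨k₁,k₂⟩ : ℤ√(-6)).im = k₂ from rfl] at hD ⊢
      rw [hD, Int.mul_ediv_cancel_left _ he0, hDz]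


def conjEquiv' (n a b q : ℤ) :
    {z : ℤ√(-6) // z.norm = n ∧ q ∣ (z.im * a - z.re * b)} ≃
    {z : ℤ√(-6) // z.norm = n ∧ q ∣ (z.im * a + z.re * b)} where
  toFun z := ⟨star z.1, by
    rcases z with ⟨z, h1, h2⟩
    refine ⟨by rw [Zsqrtd.norm_conj]; exact h1, ?_⟩
    have : (star z).im * a + (star z).re * b = -(z.im * a - z.re * b) := by
      simp [Zsqrtd.re_star, Zsqrtd.im_star]; ring
    rw [this]; exact h2.neg_right⟩
  invFun z := ⟨star z.1, by
    rcases z with ⟨z, h1, h2⟩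
    refine ⟨by rw [Zsqrtd.norm_conj]; exact h1, ?_⟩
    have : (star z).im * a - (star z).re * b = -(z.im * a + z.re * b) := by
      simp [Zsqrtd.re_star, Zsqrtd.im_star]; ring
    rw [this]; exact h2.neg_right⟩
  left_inv z := by simp
  right_inv z := by simp

lemma card_step (p : ℕ) (hp : p.Prime) (hgt : 3 < p) (M e : ℤ) (hpM : ¬ (p:ℤ) ∣ M)
    (he : e = 1 ∨ e = 2) (w : ℤ√(-6)) (hw : w.norm = e * p) :
    Nat.card {z : ℤ√(-6) // z.norm = (p:ℤ) * M} = 2 * Nat.card {u : ℤ√(-6) // u.norm = e * M} := by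
  classical
  set S : Set (ℤ√(-6)) := {z | z.norm = (p:ℤ) * M} with hS
  set A : Set (ℤ√(-6)) := {z | z.norm = (p:ℤ) * M ∧ (p:ℤ) ∣ (z.im * w.re - z.re * w.im)} with hA
  set B : Set (ℤ√(-6)) := {z | z.norm = (p:ℤ) * M ∧ (p:ℤ) ∣ (z.im * w.re + z.re * w.im)} with hB
  have hSfin : S.Finite := Set.finite_coe_iff.mp (finNm ((p:ℤ)*M))
  have hAfin : A.Finite := hSfin.subset (fun z hz => hz.1)
  have hBfin : B.Finite := hSfin.subset (fun z hz => hz.1)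
  have hunion : A ∪ B = S := by
    ext z
    constructor
    · rintro (h | h) <;> exact h.1
    · intro hz
      rcases (dichotomy p hp hgt M e hpM he w hw z hz).1 with h | h
      · exact Or.inl ⟨hz, h⟩
      · exact Or.inr ⟨hz, h⟩
  have hdisj : Disjoint A B := by
    rw [Set.disjoint_left]
    rintro z ⟨hz, h1⟩ ⟨_, h2⟩
    exact (dichotomy p hp hgt M e hpM he w hw z hz).2 ⟨h1, h2⟩
  have h1 : Nat.card {z : ℤ√(-6) // z.norm = (p:ℤ) * M} = S.ncard := by
    rw [show {z : ℤ√(-6) // z.norm = (p:ℤ) * M} = ↥S from rfl, Nat.card_coe_set_eq]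
  have h2 : S.ncard = A.ncard + B.ncard := by
    rw [← hunion, Set.ncard_union_eq hdisj hAfin hBfin]
  have hAcard : A.ncard = Nat.card {u : ℤ√(-6) // u.norm = e * M} := by
    rw [← Nat.card_coe_set_eq]
    show Nat.card {z : ℤ√(-6) // z.norm = (p:ℤ) * M ∧ (p:ℤ) ∣ (z.im * w.re - z.re * w.im)} = _
    exact Nat.card_congr (Equiv.symm (stepEquiv p hp hgt M e hpM he w hw))
  have hBcard : B.ncard = A.ncard := by
    rw [← Nat.card_coe_set_eq, ← Nat.card_coe_set_eq]
    show Nat.card {z : ℤ√(-6) // z.norm = (p:ℤ) * M ∧ (p:ℤ) ∣ (z.im * w.re + z.re * w.im)}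
      = Nat.card {z : ℤ√(-6) // z.norm = (p:ℤ) * M ∧ (p:ℤ) ∣ (z.im * w.re - z.re * w.im)}
    exact Nat.card_congr (Equiv.symm (conjEquiv' ((p:ℤ)*M) w.re w.im p))
  rw [h1, h2, hAcard, hBcard, hAcard]
  ring

lemma thue (p : ℕ) (hp : p.Prime) (c : ℤ) (hc : (p:ℤ) ∣ c^2 + 6) :
    ∃ X Y : ℤ, (p:ℤ) ∣ (X^2 + 6*Y^2) ∧ 0 < X^2 + 6*Y^2 ∧ X^2 + 6*Y^2 < 7*p := by
  classical
  haveI : Fact p.Prime := ⟨hp⟩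
  set r : ℕ := Nat.sqrt p with hr
  set s : Finset (ℤ×ℤ) := Finset.Icc (0:ℤ) r ×ˢ Finset.Icc (0:ℤ) r with hs
  have hcard : s.card = (r+1) * (r+1) := by
    rw [hs, Finset.card_product, Int.card_Icc]
    simp
  have hlt : Fintype.card (ZMod p) < s.card := by
    rw [ZMod.card, hcard]
    calc p < (r+1) * (r+1) := by
            have := Nat.lt_succ_sqrt p
            nlinarith [Nat.lt_succ_sqrt p]
         _ = _ := rfl
  obtain ⟨q1, hq1, q2, hq2, hne, heq⟩ := Finset.exists_ne_map_eq_of_card_lt_of_maps_to hlt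
    (f := fun q : ℤ×ℤ => ((q.1 * c + q.2 : ℤ) : ZMod p)) (fun q _ => Finset.mem_univ _)
  refine ⟨q1.2 - q2.2, q1.1 - q2.1, ?_, ?_, ?_⟩
  · have hd : (p:ℤ) ∣ ((q1.1 - q2.1) * c + (q1.2 - q2.2)) := by
      rw [← ZMod.intCast_zmod_eq_zero_iff_dvd]
      push_cast
      rw [show ((q1.1:ZMod p) - q2.1) * c + ((q1.2:ZMod p) - q2.2)
          = ((q1.1:ZMod p) * c + q1.2) - ((q2.1:ZMod p) * c + q2.2) by ring]
      have : ((q1.1 * c + q1.2 : ℤ) : ZMod p) = ((q2.1 * c + q2.2 : ℤ) : ZMod p) := heq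
      push_cast at this
      rw [this]; ring
    set X := q1.2 - q2.2; set Y := q1.1 - q2.1
    have key : X^2 + 6*Y^2 = (X + c*Y) * (X - c*Y) + (c^2+6) * Y^2 := by ring
    rw [key]
    refine dvd_add (Dvd.dvd.mul_right ?_ _) (Dvd.dvd.mul_right hc _)
    rwa [show X + c*Y = Y * c + X by ring]
  · have hb1 := Finset.mem_product.mp hq1
    have hb2 := Finset.mem_product.mp hq2
    simp only [Finset.mem_Icc] at hb1 hb2
    rcases hb1 with ⟨⟨h11, h12⟩, h13, h14⟩
    rcases hb2 with ⟨⟨h21, h22⟩, h23, h24⟩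
    have hne' : q1.2 - q2.2 ≠ 0 ∨ q1.1 - q2.1 ≠ 0 := by
      by_contra hcon
      push_neg at hcon
      exact hne (Prod.ext (by omega) (by omega))
    rcases hne' with h | h
    · have := sq_pos_of_ne_zero h
      nlinarith [sq_nonneg (q1.1 - q2.1)]
    · have := sq_pos_of_ne_zero h
      nlinarith [sq_nonneg (q1.2 - q2.2)]
  · have hb1 := Finset.mem_product.mp hq1
    have hb2 := Finset.mem_product.mp hq2
    simp only [Finset.mem_Icc] at hb1 hb2
    rcases hb1 with ⟨⟨h11, h12⟩, h13, h14⟩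
    rcases hb2 with ⟨⟨h21, h22⟩, h23, h24⟩
    have hrp : (r:ℤ)^2 < (p:ℤ) := by
      have h1 : r * r ≤ p := by have := Nat.sqrt_le' p; nlinarith [this]
      have h2 : r * r ≠ p := by
        intro hrr
        have hdvd : r ∣ p := ⟨r, hrr.symm⟩
        rcases (Nat.Prime.eq_one_or_self_of_dvd hp r hdvd) with h | h
        · rw [h] at hrr; simpa [← hrr] using hp.one_lt
        · rw [h] at hrr
          have := hp.two_le
          nlinarith
      have : r * r < p := lt_of_le_of_ne h1 h2
      rw [sq]
      exact_mod_cast this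
    nlinarith [sq_nonneg (q1.1 - q2.1), sq_nonneg (q1.2 - q2.2)]

lemma exists_w (p : ℕ) (hp : p.Prime) (hgt : 3 < p) (hj : jacobiSym (-6) p = 1) :
    ∃ (e : ℤ) (w : ℤ√(-6)), (e = 1 ∨ e = 2) ∧ w.norm = e * p := by
  haveI : Fact p.Prime := ⟨hp⟩
  -- get square root of -6 mod p
  have hne : ((-6 : ℤ) : ZMod p) ≠ 0 := by
    rw [Ne, ZMod.intCast_zmod_eq_zero_iff_dvd]
    intro h
    have h6 : (p:ℤ) ∣ 2*3 := by norm_num; exact dvd_neg.mp h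
    have hpZ : Prime (p:ℤ) := Nat.prime_iff_prime_int.mp hp
    have hgt' : 3 < (p:ℤ) := by exact_mod_cast hgt
    rcases hpZ.dvd_mul.mp h6 with h' | h' <;>
      have := Int.le_of_dvd (by norm_num) h' <;> omega
  have hleg : legendreSym p (-6) = 1 := by rw [jacobiSym.legendreSym.to_jacobiSym]; exact hj
  have hsq : IsSquare ((-6 : ℤ) : ZMod p) := (legendreSym.eq_one_iff p hne).mp hleg
  obtain ⟨s, hs⟩ := hsq
  have hc : (p:ℤ) ∣ ((s.val : ℤ)^2 + 6) := by
    rw [← ZMod.intCast_zmod_eq_zero_iff_dvd]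
    push_cast
    rw [ZMod.natCast_val, ZMod.cast_id]
    rw [show (s:ZMod p)^2 = s * s from sq s]
    rw [← hs]; ring
  obtain ⟨X, Y, hdvd, hpos, hlt⟩ := thue p hp _ hc
  obtain ⟨k, hk⟩ := hdvd
  have hp0 : (0:ℤ) < p := by exact_mod_cast hp.pos
  have hk1 : 1 ≤ k := by nlinarith
  have hk6 : k ≤ 6 := by nlinarith
  interval_cases k
  -- k = 1
  · exact ⟨1, ⟨X, Y⟩, Or.inl rfl, by rw [normdef]; rw [hk]; push_cast; ring⟩
  -- k = 2
  · exact ⟨2, ⟨X, Y⟩, Or.inr rfl, by rw [normdef]; rw [hk]; push_cast; ring⟩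
  -- k = 3
  · have h3 : (3:ℤ) ∣ X := by
      have hpr : Prime (3:ℤ) := Int.prime_three
      apply hpr.dvd_of_dvd_pow (n := 2)
      exact ⟨(p:ℤ) - 2*Y^2, by linarith [hk]⟩
    obtain ⟨X', hX'⟩ := h3
    refine ⟨2, ⟨2*Y, X'⟩, Or.inr rfl, ?_⟩
    rw [normdef]
    rw [hX'] at hk
    push_cast
    nlinarith [hk]
  -- k = 4
  · have hXe : Even X := by
      have : Even (X^2) := ⟨2*(p:ℤ) - 3*Y^2, by linarith [hk]⟩
      exact (Int.even_pow.mp this).1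
    obtain ⟨a, ha⟩ := hXe
    have hYe : Even Y := by
      have h3 : Even (3*Y^2) := ⟨(p:ℤ) - a^2, by rw [ha] at hk; nlinarith [hk]⟩
      have : Even (Y^2) := by
        rcases Int.even_mul.mp h3 with h | h
        · exact absurd h (by decide)
        · exact h
      exact (Int.even_pow.mp this).1
    obtain ⟨b, hb⟩ := hYe
    refine ⟨1, ⟨a, b⟩, Or.inl rfl, ?_⟩
    rw [normdef]
    rw [ha, hb] at hk
    push_cast
    nlinarith [hk]
  -- k = 5
  · have h5 : ((X : ZMod 5))^2 + (Y : ZMod 5)^2 = 0 := by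
      have := congrArg (fun t : ℤ => (t : ZMod 5)) hk
      push_cast at this
      rw [show (6:ZMod 5) = 1 by decide, show (5:ZMod 5) = 0 by decide, mul_zero] at this
      simpa using this
    have hcases : (5:ℤ) ∣ X - 2*Y ∨ (5:ℤ) ∣ X + 2*Y := by
      have hdec : ∀ u v : ZMod 5, u^2 + v^2 = 0 → (u - 2*v = 0 ∨ u + 2*v = 0) := by decide
      rcases hdec _ _ h5 with h | h
      · left
        have := (ZMod.intCast_zmod_eq_zero_iff_dvd (X - 2*Y) 5).mp (by push_cast; exact h)
        exact_mod_cast this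
      · right
        have := (ZMod.intCast_zmod_eq_zero_iff_dvd (X + 2*Y) 5).mp (by push_cast; exact h)
        exact_mod_cast this
    rcases hcases with h | h
    · obtain ⟨b, hb⟩ := h
      have hX : X = 5*b + 2*Y := by linarith
      refine ⟨2, ⟨2*(b+Y), b⟩, Or.inr rfl, ?_⟩
      rw [normdef]
      rw [hX] at hk
      push_cast
      ring_nf at hk ⊢
      linarith
    · obtain ⟨b, hb⟩ := h
      have hX : X = 5*b - 2*Y := by linarith
      refine ⟨2, ⟨2*(b-Y), b⟩, Or.inr rfl, ?_⟩
      rw [normdef]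
      rw [hX] at hk
      push_cast
      ring_nf at hk ⊢
      linarith
  -- k = 6
  · have hXe : Even X := by
      have : Even (X^2) := ⟨3*(p:ℤ) - 3*Y^2, by linarith [hk]⟩
      exact (Int.even_pow.mp this).1
    obtain ⟨a, ha⟩ := hXe
    have h2 : 2*a^2 + 3*Y^2 = 3*(p:ℤ) := by rw [ha] at hk; nlinarith [hk]
    have h3 : (3:ℤ) ∣ a := by
      have hpr : Prime (3:ℤ) := Int.prime_three
      apply hpr.dvd_of_dvd_pow (n := 2)
      refine (hpr.dvd_mul.mp (⟨(p:ℤ) - Y^2, by linarith⟩ : (3:ℤ) ∣ 2*a^2)).resolve_left (by decide)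
    obtain ⟨b, hb⟩ := h3
    refine ⟨1, ⟨Y, b⟩, Or.inl rfl, ?_⟩
    rw [normdef]
    rw [hb] at h2
    push_cast
    nlinarith [h2]

lemma main_count : ∀ m : ℕ, 0 < m → Squarefree m → ¬(2 ∣ m) → ¬(3 ∣ m) →
    (∀ p ∈ m.primeFactors, jacobiSym (-6) p = 1) →
    Nat.card {z : ℤ√(-6) // z.norm = (m:ℤ)} + Nat.card {z : ℤ√(-6) // z.norm = 2*(m:ℤ)}
      = 2 ^ (m.primeFactors.card + 1) := by
  intro m
  induction m using Nat.strong_induction_on with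
  | _ m ih =>
    intro hm hsf h2 h3 hJ
    rcases eq_or_lt_of_le (Nat.one_le_iff_ne_zero.mpr hm.ne') with h1 | h1
    · -- m = 1
      have hm1 : m = 1 := h1.symm
      subst hm1
      simp only [Nat.cast_one, Nat.primeFactors_one, Finset.card_empty]
      rw [cardone, mul_one, cardtwo]
      norm_num
    · -- m > 1
      set p := m.minFac with hpdef
      have hp : p.Prime := Nat.minFac_prime (by omega)
      have hpd : p ∣ m := Nat.minFac_dvd m
      obtain ⟨n, hmn⟩ := hpd
      have hn0 : 0 < n := by
        rcases Nat.eq_zero_or_pos n with h | h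
        · subst h; simp at hmn; omega
        · exact h
      have hpn : ¬ p ∣ n := by
        intro ⟨k, hk⟩
        have : p * p ∣ m := ⟨k, by rw [hmn, hk]; ring⟩
        exact hp.one_lt.ne' (Nat.isUnit_iff.mp (hsf p this))
      have hp2 : p ≠ 2 := fun h => h2 (h ▸ Nat.minFac_dvd m)
      have hp3 : p ≠ 3 := fun h => h3 (h ▸ Nat.minFac_dvd m)
      have hp4 : p ≠ 4 := fun h => by rw [h] at hp; norm_num at hp
      have hgt : 3 < p := by have := hp.two_le; omega
      have hndvd : n ∣ m := ⟨p, by rw [hmn]; ring⟩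
      have hnm : n < m := by
        have := hp.two_le
        calc n < 2 * n := by omega
        _ ≤ p * n := by exact Nat.mul_le_mul_right n this
        _ = m := hmn.symm
      have hsfn : Squarefree n := hsf.squarefree_of_dvd hndvd
      have h2n : ¬ 2 ∣ n := fun h => h2 (h.trans hndvd)
      have h3n : ¬ 3 ∣ n := fun h => h3 (h.trans hndvd)
      have hJn : ∀ q ∈ n.primeFactors, jacobiSym (-6) q = 1 := fun q hq =>
        hJ q (Nat.primeFactors_mono hndvd (by omega) hq)
      have hcard : m.primeFactors.card = n.primeFactors.card + 1 := by
        rw [hmn, Nat.primeFactors_mul (hp.ne_zero) (by omega), hp.primeFactors]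
        rw [← Finset.insert_eq, Finset.card_insert_of_notMem]
        intro h
        exact hpn (Nat.dvd_of_mem_primeFactors h)
      have hpnZ : ¬ (p:ℤ) ∣ (n:ℤ) := by
        intro h
        exact hpn (by exact_mod_cast h)
      have hpZ : Prime (p:ℤ) := Nat.prime_iff_prime_int.mp hp
      have hp2nZ : ¬ (p:ℤ) ∣ 2*(n:ℤ) := by
        intro h
        rcases hpZ.dvd_mul.mp h with h | h
        · have := Int.le_of_dvd (by norm_num) h
          have : 3 < (p:ℤ) := by exact_mod_cast hgt
          omega
        · exact hpnZ h
      obtain ⟨e, w, he, hw⟩ := exists_w p hp hgt (hJ p (Nat.mem_primeFactors.mpr ⟨hp, Nat.minFac_dvd m, by omega⟩))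
      have hmZ : ((m:ℕ):ℤ) = (p:ℤ) * (n:ℤ) := by rw [hmn]; push_cast; ring
      have hmZ2 : 2 * ((m:ℕ):ℤ) = (p:ℤ) * (2*(n:ℤ)) := by rw [hmn]; push_cast; ring
      have ihn := ih n hnm hn0 hsfn h2n h3n hJn
      have step1 := card_step p hp hgt (n:ℤ) e hpnZ he w hw
      have step2 := card_step p hp hgt (2*(n:ℤ)) e hp2nZ he w hw
      rw [hmZ2, hmZ, step1, step2, hcard]
      rcases he with rfl | rfl
      · simp only [one_mul] at *
        omega
      · -- e = 2 : N(2*(2n)) = N(4n) = N(n)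
        have h4 : Nat.card {z : ℤ√(-6) // z.norm = 2*(2*(n:ℤ))} = Nat.card {z : ℤ√(-6) // z.norm = (n:ℤ)} := by
          rw [show 2*(2*(n:ℤ)) = 4*(n:ℤ) by ring]
          exact (Nat.card_congr (fourEquiv (n:ℤ))).symm
        rw [h4]
        omega

lemma norm_m_empty (m : ℕ) (h3 : m % 3 = 2) : Nat.card {z : ℤ√(-6) // z.norm = (m:ℤ)} = 0 := by
  have : IsEmpty {z : ℤ√(-6) // z.norm = (m:ℤ)} := by
    constructor
    rintro ⟨z, hz⟩
    rw [normdef] at hz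
    obtain ⟨k, hk⟩ : ∃ k, m = 3*k+2 := ⟨m/3, by omega⟩
    rw [hk] at hz
    have hcast := congrArg (fun t : ℤ => (t : ZMod 3)) hz
    push_cast at hcast
    rw [show (6 : ZMod 3) = 0 by decide, show (3 : ZMod 3) = 0 by decide] at hcast
    simp only [zero_mul, mul_zero, zero_add, add_zero] at hcast
    have : ∀ u : ZMod 3, u^2 ≠ 2 := by decide
    exact this _ hcast
  simp

theorem stmt12 (m t : ℕ) (hm : 0 < m) (hsf : Squarefree m) (h24 : m % 24 = 11)
    (ht : m.primeFactors.card = t)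
    (hJ : ∀ p ∈ m.primeFactors, jacobiSym (-6) p = 1) :
    Nat.card {q : ℤ × ℤ // 2 * q.1 ^ 2 + 3 * q.2 ^ 2 = (m : ℤ)} = 2 ^ (t + 1) := by
  have h2 : ¬ 2 ∣ m := by omega
  have h3 : ¬ 3 ∣ m := by omega
  have hmc := main_count m hm hsf h2 h3 hJ
  have h0 := norm_m_empty m (by omega)
  have hsol := Nat.card_congr (solEquiv (m:ℤ))
  rw [hsol, ← ht]
  omega
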